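/- For any numerical set S, A(S) ⊆ A(S⁽²⁾), where S⁽²⁾ denotes the complement of the complement of S. -/
import Mathlib


open Set

def IsNumericalSet (S : Set ℕ) : Prop := 0 ∈ S ∧ Sᶜ.Finite

def IsNumericalSemigroup (S : Set ℕ) : Prop :=
  IsNumericalSet S ∧ ∀ a ∈ S, ∀ b ∈ S, a + b ∈ S

/-- The associated set `A(S) = {s ∈ S : s + S ⊆ S}`. -/
def A (S : Set ℕ) : Set ℕ := {s ∈ S | ∀ t ∈ S, s + t ∈ S}

/-- The Frobenius number: the largest gap of `S`. -/
noncomputable def F (S : Set ℕ) : ℕ := sSup Sᶜ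

/-- The base: the largest element of `S` below `F S`. -/
noncomputable def B (S : Set ℕ) : ℕ := sSup {s | s ∈ S ∧ s < F S}

/-- The multiplicity: the smallest positive element of `S`. -/
noncomputable def m (S : Set ℕ) : ℕ := sInf {s | s ∈ S ∧ 0 < s}

/-- The complement numerical set (for `S ≠ ℕ`). -/
noncomputable def Stilde (S : Set ℕ) : Set ℕ :=
  {x | ∃ s ∈ S, s ≤ B S ∧ x = B S - s} ∪ {n | B S ≤ n}

-- The complement operation, with the convention that the complement of ℕ is ℕ.
open Classical in
noncomputable def complOp (S : Set ℕ) : Set ℕ :=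
  if S = Set.univ then Set.univ else Stilde S

/-- The genus: the number of gaps. -/
noncomputable def genus (S : Set ℕ) : ℕ := Sᶜ.ncard

/-- The number of boxes with hook length 1. -/
noncomputable def c1 (S : Set ℕ) : ℕ := {n | n ∈ S ∧ n + 1 ∉ S}.ncard

/-- An atom: a positive element not a sum of two positive elements. -/
def IsAtomOf (S : Set ℕ) (a : ℕ) : Prop :=
  a ∈ S ∧ 0 < a ∧ ¬ ∃ x ∈ S, ∃ y ∈ S, 0 < x ∧ 0 < y ∧ a = x + y

/-- A small atom: an atom smaller than the Frobenius number. -/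
def IsSmallAtom (S : Set ℕ) (a : ℕ) : Prop := IsAtomOf S a ∧ a < F S

/-- The embedding dimension: the number of atoms. -/
noncomputable def numAtoms (S : Set ℕ) : ℕ := {a | IsAtomOf S a}.ncard

/-- Maximal embedding dimension. -/
def MaxED (S : Set ℕ) : Prop := numAtoms S = m S


theorem associated_subset_associated_double_complement (S : Set ℕ)
    (hS : IsNumericalSet S) : A S ⊆ A (complOp (complOp S)) := by
  obtain ⟨h0S, hfinS⟩ := hS
  intro a ha
  obtain ⟨haS, hadd⟩ := ha
  by_cases hSu : S = Set.univ
  · have h1 : complOp S = Set.univ := by rw [complOp, if_pos hSu]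
    rw [h1, complOp, if_pos rfl]
    exact ⟨Set.mem_univ a, fun t _ => Set.mem_univ _⟩
  have h1 : complOp S = Stilde S := by rw [complOp, if_neg hSu]
  rw [h1]
  -- Facts about F S and B S
  have hScne : Sᶜ.Nonempty := Set.nonempty_compl.2 hSu
  have hFS : F S ∈ Sᶜ := Nat.sSup_mem hScne hfinS.bddAbove
  have hFSpos : 0 < F S := by
    rcases Nat.eq_zero_or_pos (F S) with h | h
    · exact absurd (h ▸ h0S) hFS
    · exact h
  have hBmem : B S ∈ {s | s ∈ S ∧ s < F S} := by
    refine Nat.sSup_mem ⟨0, ⟨h0S, hFSpos⟩⟩ ⟨F S, fun x hx => hx.2.le⟩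
  obtain ⟨hBS, hBlt⟩ := hBmem
  set T := Stilde S with hTdef
  have hmemT : ∀ x, x ∈ T ↔ (∃ s ∈ S, s ≤ B S ∧ x = B S - s) ∨ B S ≤ x := by
    intro x
    simp only [hTdef, Stilde, Set.mem_union, Set.mem_setOf_eq]
  by_cases hTu : T = Set.univ
  · rw [complOp, if_pos hTu]
    exact ⟨Set.mem_univ a, fun t _ => Set.mem_univ _⟩
  rw [complOp, if_neg hTu]

  have h0T : (0 : ℕ) ∈ T := (hmemT 0).2 (Or.inl ⟨B S, hBS, le_refl _, by simp⟩)
  have hTc_sub : Tᶜ ⊆ Set.Iio (B S) := by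
    intro x hx
    simp only [Set.mem_Iio]
    by_contra hlt
    exact hx ((hmemT x).2 (Or.inr (le_of_not_gt hlt)))
  have hTfin : Tᶜ.Finite := (Set.finite_Iio (B S)).subset hTc_sub
  have hTcne : Tᶜ.Nonempty := Set.nonempty_compl.2 hTu
  have hFT : F T ∈ Tᶜ := Nat.sSup_mem hTcne hTfin.bddAbove
  have hFTpos : 0 < F T := by
    rcases Nat.eq_zero_or_pos (F T) with h | h
    · exact absurd (h ▸ h0T) hFT
    · exact h
  have hFTltB : F T < B S := hTc_sub hFT
  have hBTmem : B T ∈ {s | s ∈ T ∧ s < F T} := by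
    refine Nat.sSup_mem ⟨0, ⟨h0T, hFTpos⟩⟩ ⟨F T, fun x hx => hx.2.le⟩
  obtain ⟨hBTT, hBTlt⟩ := hBTmem
  have hBTltB : B T < B S := lt_trans hBTlt hFTltB
  -- B T = B S - s₀ for some s₀ ∈ S
  obtain ⟨s0, hs0S, hs0le, hs0eq⟩ : ∃ s ∈ S, s ≤ B S ∧ B T = B S - s := by
    rcases (hmemT (B T)).1 hBTT with h | h
    · exact h
    · omega
  have hs0pos : 0 < s0 := by omega
  have hmemU : ∀ x, x ∈ Stilde T ↔ (∃ t ∈ T, t ≤ B T ∧ x = B T - t) ∨ B T ≤ x := by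
    intro x
    simp only [Stilde, Set.mem_union, Set.mem_setOf_eq]
  -- key: anything of the form s - s₀ with s ∈ S, s₀ ≤ s ≤ B S is in Stilde T
  have hkey : ∀ s ∈ S, s0 ≤ s → s ≤ B S → s - s0 ∈ Stilde T := by
    intro s hsS h1 h2
    refine (hmemU _).2 (Or.inl ⟨B S - s, ?_, ?_, ?_⟩)
    · exact (hmemT _).2 (Or.inl ⟨s, hsS, h2, rfl⟩)
    · omega
    · omega
  refine ⟨?_, ?_⟩
  · -- a ∈ Stilde T
    by_cases h : B T ≤ a
    · exact (hmemU a).2 (Or.inr h)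
    · have haB : a + s0 ≤ B S := by omega
      have := hkey (a + s0) (hadd s0 hs0S) (by omega) haB
      simpa using this
  · -- ∀ x ∈ Stilde T, a + x ∈ Stilde T
    intro x hx
    by_cases h : B T ≤ a + x
    · exact (hmemU _).2 (Or.inr h)
    · push_neg at h
      have hxlt : x < B T := by omega
      rcases (hmemU x).1 hx with ⟨t, htT, htle, hxeq⟩ | hge
      · rcases (hmemT t).1 htT with ⟨s, hsS, hsle, hteq⟩ | hge'
        · have hs0s : s0 ≤ s := by omega
          have hxs : x = s - s0 := by omega
          have hasS : a + s ∈ S := hadd s hsS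
          have hasB : a + s ≤ B S := by omega
          have := hkey (a + s) hasS (by omega) hasB
          have heq : a + s - s0 = a + x := by omega
          rwa [heq] at this
        · omega
      · omega
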